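/- arXiv:1605.01971 — 8 statements merged into one kernel-verified Lean document; each statement's English description precedes it below -/
import Mathlib

section
/- Let x ∈ X, s ∈ {1,…,n}, and pick y_s(x) ∈ Y_s(x). Define the direction d by d_s = y_s(x) − x_s and d_i = 0 for i ≠ s. Then the one-sided directional derivative of μ at x in direction d satisfies μ'(x; d) ≤ −φ_s(x). -/
open scoped RealInnerProductSpace
open Filter Topology

noncomputable section

abbrev Blk {n : ℕ} (N : Fin n → ℕ) (i : Fin n) : Type :=
  EuclideanSpace ℝ (Fin (N i))

abbrev Tot {n : ℕ} (N : Fin n → ℕ) : Type :=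
  PiLp 2 (fun i => EuclideanSpace ℝ (Fin (N i)))

theorem stmt6
    {n : ℕ} {N : Fin n → ℕ}
    (Xi : ∀ i, Set (Blk N i))
    (hXne : ∀ i, (Xi i).Nonempty)
    (hXcv : ∀ i, Convex ℝ (Xi i))
    (hXcp : ∀ i, IsCompact (Xi i))
    (f : Tot N → ℝ) (g : Tot N → Tot N)
    (hf : ∀ x, HasGradientAt f (g x) x)
    (hg : Continuous g)
    (h : ∀ i, Blk N i → ℝ)
    (hhcv : ∀ i, ConvexOn ℝ (Xi i) (h i))
    (hhlsc : ∀ i, LowerSemicontinuousOn (h i) (Xi i))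
    (X : Set (Tot N)) (hX : X = {x | ∀ i, x i ∈ Xi i})
    (μ : Tot N → ℝ) (hμ : ∀ x, μ x = f x + ∑ i, h i (x i))
    (φ : ∀ i, Tot N → ℝ)
    (hφ : ∀ i x, φ i x =
      sSup ((fun y => ⟪g x i, x i - y⟫ + h i (x i) - h i y) '' Xi i))
    (Y : ∀ i, Tot N → Set (Blk N i))
    (hY : ∀ i x, Y i x = {y ∈ Xi i | ∀ z ∈ Xi i,
      ⟪g x i, y⟫ + h i y ≤ ⟪g x i, z⟫ + h i z})
    (x : Tot N) (hx : x ∈ X) (s : Fin n)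
    (ys : Blk N s) (hys : ys ∈ Y s x)
    (d : Tot N) (hds : d s = ys - x s) (hd0 : ∀ i, i ≠ s → d i = 0) :
    Filter.limsup (fun t : ℝ => (((μ (x + t • d) - μ x) / t : ℝ) : EReal))
        (𝓝[>] (0 : ℝ))
      ≤ ((-(φ s x) : ℝ) : EReal) := by
  have hxs : x s ∈ Xi s := by rw [hX] at hx; exact hx s
  rw [hY] at hys
  obtain ⟨hysX, hysmin⟩ := hys
  set A : ℝ := ⟪g x s, x s - ys⟫ + h s (x s) - h s ys with hA
  -- φ s x ≤ A
  have hφle : φ s x ≤ A := by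
    rw [hφ]
    apply csSup_le ((hXne s).image _)
    rintro b ⟨z, hz, rfl⟩
    have := hysmin z hz
    simp only [inner_sub_right, hA]
    linarith
  set C : ℝ := h s ys - h s (x s) with hC
  -- derivative of f along the line
  have hline : HasDerivAt (fun t : ℝ => x + t • d) d 0 := by
    simpa using ((hasDerivAt_id (0:ℝ)).smul_const d).const_add x
  have hderiv : HasDerivAt (fun t : ℝ => f (x + t • d)) ⟪g x, d⟫ 0 := by
    have hF : HasFDerivAt f ((InnerProductSpace.toDual ℝ (Tot N)) (g x))
        ((fun t : ℝ => x + t • d) 0) := by simpa using (hf x).hasFDerivAt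
    have := hF.comp_hasDerivAt 0 hline
    simp [Function.comp, InnerProductSpace.toDual_apply_apply] at this; exact this
  have hslope : Tendsto (fun t : ℝ => (f (x + t • d) - f x) / t) (𝓝[>] 0)
      (𝓝 ⟪g x, d⟫) := by
    have := (hasDerivAt_iff_tendsto_slope.1 hderiv).mono_left
      (nhdsWithin_mono 0 (fun t (ht : t ∈ Set.Ioi (0:ℝ)) => ne_of_gt ht))
    refine this.congr (fun t => ?_)
    simp [slope_def_field]
  have hv : Tendsto (fun t : ℝ => (f (x + t • d) - f x) / t + C) (𝓝[>] 0)
      (𝓝 (⟪g x, d⟫ + C)) := hslope.add tendsto_const_nhds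
  -- eventual bound on the quotient
  have hev : ∀ᶠ t in 𝓝[>] (0:ℝ),
      (μ (x + t • d) - μ x) / t ≤ (f (x + t • d) - f x) / t + C := by
    filter_upwards [Ioc_mem_nhdsGT (by norm_num : (0:ℝ) < 1)] with t ht
    obtain ⟨ht0, ht1⟩ := ht
    have hcoord : ∀ i, (x + t • d) i = x i + t • d i := fun i => rfl
    have hsum : (∑ i, h i ((x + t • d) i)) - ∑ i, h i (x i)
        = h s (x s + t • d s) - h s (x s) := by
      rw [← Finset.sum_sub_distrib]
      rw [Finset.sum_eq_single s]
      · rw [hcoord]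
      · intro i _ hi
        rw [hcoord, hd0 i hi]
        simp
      · intro hs'; exact absurd (Finset.mem_univ s) hs'
    have hconv : h s (x s + t • d s) - h s (x s) ≤ t * C := by
      have hxy : x s + t • d s = (1 - t) • x s + t • ys := by
        rw [hds]; module
      have := (hhcv s).2 hxs hysX (by linarith : (0:ℝ) ≤ 1 - t) (le_of_lt ht0)
        (by ring)
      rw [← hxy] at this
      simp only [smul_eq_mul] at this
      rw [hC]; nlinarith
    have hμdiff : μ (x + t • d) - μ x
        = (f (x + t • d) - f x) + (h s (x s + t • d s) - h s (x s)) := by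
      rw [hμ, hμ]; rw [← hsum]; ring
    rw [hμdiff, add_div]
    gcongr
    rw [div_le_iff₀ ht0]
    linarith [hconv]
  -- limsup bound
  have hlim : Filter.limsup (fun t : ℝ => (((μ (x + t • d) - μ x) / t : ℝ) : EReal))
      (𝓝[>] (0 : ℝ)) ≤ ((⟪g x, d⟫ + C : ℝ) : EReal) := by
    have hvE : Tendsto (fun t : ℝ => (((f (x + t • d) - f x) / t + C : ℝ) : EReal))
        (𝓝[>] 0) (𝓝 ((⟪g x, d⟫ + C : ℝ) : EReal)) :=
      (continuous_coe_real_ereal.tendsto _).comp hv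
    rw [← hvE.limsup_eq]
    refine limsup_le_limsup ?_ Filter.isCobounded_le_of_bot Filter.isBounded_le_of_top
    filter_upwards [hev] with t ht
    exact_mod_cast ht
  refine hlim.trans ?_
  have hgd : ⟪g x, d⟫ + C = -A := by
    have : ⟪g x, d⟫ = ⟪g x s, ys - x s⟫ := by
      rw [PiLp.inner_apply, Finset.sum_eq_single s]
      · rw [hds]
      · intro i _ hi; rw [hd0 i hi]; simp
      · intro hs'; exact absurd (Finset.mem_univ s) hs'
    rw [this, hA, hC, inner_sub_right, inner_sub_right]; ring
  rw [hgd]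
  exact_mod_cast neg_le_neg hφle
end
end

section
/- The Armijo line-search is finite: let x ∈ X, s ∈ {1,…,n} with φ_s(x) > 0, let β ∈ (0,1), θ ∈ (0,1), choose y_s ∈ Y_s(x), and define d by d_s = y_s − x_s and d_i = 0 for i ≠ s. Then there exists m ∈ ℕ (m ≥ 0) such that μ(x + θ^m d) ≤ μ(x) − β θ^m φ_s(x). -/
open scoped RealInnerProductSpace
open Filter Topology

noncomputable section

theorem stmt7
    {n : ℕ} {N : Fin n → ℕ}
    (Xi : ∀ i, Set (Blk N i))
    (hXne : ∀ i, (Xi i).Nonempty)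
    (hXcv : ∀ i, Convex ℝ (Xi i))
    (hXcp : ∀ i, IsCompact (Xi i))
    (f : Tot N → ℝ) (g : Tot N → Tot N)
    (hf : ∀ x, HasGradientAt f (g x) x)
    (hg : Continuous g)
    (h : ∀ i, Blk N i → ℝ)
    (hhcv : ∀ i, ConvexOn ℝ (Xi i) (h i))
    (hhlsc : ∀ i, LowerSemicontinuousOn (h i) (Xi i))
    (X : Set (Tot N)) (hX : X = {x | ∀ i, x i ∈ Xi i})
    (μ : Tot N → ℝ) (hμ : ∀ x, μ x = f x + ∑ i, h i (x i))
    (φ : ∀ i, Tot N → ℝ)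
    (hφ : ∀ i x, φ i x =
      sSup ((fun y => ⟪g x i, x i - y⟫ + h i (x i) - h i y) '' Xi i))
    (Y : ∀ i, Tot N → Set (Blk N i))
    (hY : ∀ i x, Y i x = {y ∈ Xi i | ∀ z ∈ Xi i,
      ⟪g x i, y⟫ + h i y ≤ ⟪g x i, z⟫ + h i z})
    (β θ : ℝ) (hβ : β ∈ Set.Ioo (0 : ℝ) 1) (hθ : θ ∈ Set.Ioo (0 : ℝ) 1)
    (x : Tot N) (hx : x ∈ X) (s : Fin n) (hφs : 0 < φ s x)
    (ys : Blk N s) (hys : ys ∈ Y s x)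
    (d : Tot N) (hds : d s = ys - x s) (hd0 : ∀ i, i ≠ s → d i = 0) :
    ∃ m : ℕ, μ (x + θ ^ m • d) ≤ μ x - β * θ ^ m * φ s x := by

  subst hX
  obtain ⟨hβ0, hβ1⟩ := hβ
  obtain ⟨hθ0, hθ1⟩ := hθ
  have hxs : x s ∈ Xi s := hx s
  rw [hY] at hys
  obtain ⟨hysX, hysmin⟩ := hys
  -- value of φ s x
  have hφval : φ s x = ⟪g x s, x s - ys⟫ + h s (x s) - h s ys := by
    rw [hφ]
    apply IsGreatest.csSup_eq
    constructor
    · exact ⟨ys, hysX, rfl⟩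
    · rintro _ ⟨z, hz, rfl⟩
      have := hysmin z hz
      simp only [inner_sub_right]
      linarith
  set c : ℝ := ⟪g x, d⟫ with hc
  have hcs : c = ⟪g x s, d s⟫ := by
    rw [hc, PiLp.inner_apply]
    rw [Finset.sum_eq_single s]
    · intro i _ hi; rw [hd0 i hi, inner_zero_right]
    · intro hns; exact absurd (Finset.mem_univ s) hns
  have hφc : φ s x = -c + h s (x s) - h s ys := by
    rw [hφval]
    have : ⟪g x s, x s - ys⟫ = -c := by
      rw [hcs, hds, inner_sub_right, inner_sub_right]; ring
    rw [this]
  -- derivative of t ↦ f (x + t • d) at 0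
  have hL : HasDerivAt (fun t : ℝ => x + t • d) d 0 := by
    simpa using ((hasDerivAt_id (0:ℝ)).smul_const d).const_add x
  have hF : HasDerivAt (fun t : ℝ => f (x + t • d)) c 0 := by
    have hfd : HasFDerivAt f (InnerProductSpace.toDual ℝ (Tot N) (g x)) (x + (0:ℝ) • d) := by
      simpa using (hf x).hasFDerivAt
    have := hfd.comp_hasDerivAt 0 hL
    simp only [InnerProductSpace.toDual_apply_apply] at this; exact this
  -- slope convergence along θ ^ m
  have hslope : Filter.Tendsto (slope (fun t : ℝ => f (x + t • d)) 0) (𝓝[≠] (0:ℝ)) (𝓝 c) :=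
    hasDerivAt_iff_tendsto_slope.mp hF
  have hslope' : Filter.Tendsto (slope (fun t : ℝ => f (x + t • d)) 0) (𝓝[>] (0:ℝ)) (𝓝 c) :=
    hslope.mono_left (nhdsWithin_mono _ (fun t ht => ne_of_gt ht))
  have hpow : Filter.Tendsto (fun m : ℕ => θ ^ m) atTop (𝓝[>] (0:ℝ)) := by
    apply tendsto_nhdsWithin_of_tendsto_nhds_of_eventually_within
    · exact tendsto_pow_atTop_nhds_zero_of_lt_one hθ0.le hθ1
    · exact Filter.Eventually.of_forall (fun m => pow_pos hθ0 m)
  have hev : ∀ᶠ m : ℕ in atTop,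
      slope (fun t : ℝ => f (x + t • d)) 0 (θ ^ m) < c + (1 - β) * φ s x := by
    apply (hslope'.comp hpow).eventually_lt_const
    nlinarith
  obtain ⟨m, hm⟩ := hev.exists
  refine ⟨m, ?_⟩
  set t : ℝ := θ ^ m with htdef
  have ht0 : 0 < t := pow_pos hθ0 m
  have ht1 : t ≤ 1 := pow_le_one₀ hθ0.le hθ1.le
  have hslope_eq : slope (fun t : ℝ => f (x + t • d)) 0 t
      = (f (x + t • d) - f x) / t := by
    rw [slope_def_field]
    simp
  have hfd : f (x + t • d) - f x < t * (c + (1 - β) * φ s x) := by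
    have := hm
    rw [hslope_eq] at this
    calc f (x + t • d) - f x = ((f (x + t • d) - f x) / t) * t := by
          field_simp
      _ < (c + (1 - β) * φ s x) * t := by
          exact mul_lt_mul_of_pos_right this ht0
      _ = t * (c + (1 - β) * φ s x) := by ring
  -- convexity bound for h s
  have hconv : h s (x s + t • d s) ≤ (1 - t) * h s (x s) + t * h s ys := by
    have heq : x s + t • d s = (1 - t) • x s + t • ys := by
      rw [hds]; module
    rw [heq]
    exact (hhcv s).2 hxs hysX (by linarith) ht0.le (by ring)
  -- sum splitting
  have hsum : ∑ i, h i ((x + t • d) i) - ∑ i, h i (x i)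
      = h s (x s + t • d s) - h s (x s) := by
    rw [← Finset.sum_sub_distrib]
    rw [Finset.sum_eq_single s]
    · rfl
    · intro i _ hi
      have : (x + t • d) i = x i := by
        simp [hd0 i hi]
      rw [this]; ring
    · intro hns; exact absurd (Finset.mem_univ s) hns
  rw [hμ, hμ]
  have := hφc
  nlinarith [hφs, ht0]
end
end

section
/- Uniform descent estimate: suppose the gradient map g is uniformly continuous on X, and let β ∈ (0,1), δ > 0. Then there exists λ' > 0 such that for every x ∈ X, every s ∈ {1,…,n} with φ_s(x) ≥ δ, every y_s ∈ Y_s(x), and every λ ∈ (0, λ'], setting d_s = y_s − x_s and d_i = 0 for i ≠ s, one has μ(x + λ d) − μ(x) ≤ −β λ φ_s(x). -/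
open scoped RealInnerProductSpace
open Filter Topology

noncomputable section

set_option maxHeartbeats 1000000 in
theorem stmt8
    {n : ℕ} {N : Fin n → ℕ}
    (Xi : ∀ i, Set (Blk N i))
    (hXne : ∀ i, (Xi i).Nonempty)
    (hXcv : ∀ i, Convex ℝ (Xi i))
    (hXcp : ∀ i, IsCompact (Xi i))
    (f : Tot N → ℝ) (g : Tot N → Tot N)
    (hf : ∀ x, HasGradientAt f (g x) x)
    (hg : Continuous g)
    (h : ∀ i, Blk N i → ℝ)
    (hhcv : ∀ i, ConvexOn ℝ (Xi i) (h i))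
    (hhlsc : ∀ i, LowerSemicontinuousOn (h i) (Xi i))
    (X : Set (Tot N)) (hX : X = {x | ∀ i, x i ∈ Xi i})
    (μ : Tot N → ℝ) (hμ : ∀ x, μ x = f x + ∑ i, h i (x i))
    (φ : ∀ i, Tot N → ℝ)
    (hφ : ∀ i x, φ i x =
      sSup ((fun y => ⟪g x i, x i - y⟫ + h i (x i) - h i y) '' Xi i))
    (Y : ∀ i, Tot N → Set (Blk N i))
    (hY : ∀ i x, Y i x = {y ∈ Xi i | ∀ z ∈ Xi i,
      ⟪g x i, y⟫ + h i y ≤ ⟪g x i, z⟫ + h i z})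
    (hgu : UniformContinuousOn g X)
    (β δ : ℝ) (hβ : β ∈ Set.Ioo (0 : ℝ) 1) (hδ : 0 < δ) :
    ∃ lam' : ℝ, 0 < lam' ∧
      ∀ x ∈ X, ∀ s : Fin n, δ ≤ φ s x →
        ∀ ys ∈ Y s x, ∀ d : Tot N, d s = ys - x s → (∀ i, i ≠ s → d i = 0) →
          ∀ lam : ℝ, 0 < lam → lam ≤ lam' →
            μ (x + lam • d) - μ x ≤ -(β * lam * φ s x) := by
  obtain ⟨hβ0, hβ1⟩ := hβ
  set M : ℝ := 1 + ∑ i, Metric.diam (Xi i) with hMdef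
  have hM1 : (1:ℝ) ≤ M := by
    have : 0 ≤ ∑ i, Metric.diam (Xi i) :=
      Finset.sum_nonneg fun i _ => Metric.diam_nonneg
    linarith
  have hM0 : (0:ℝ) < M := lt_of_lt_of_le one_pos hM1
  have hε : (0:ℝ) < (1 - β) * δ / M := by
    have : (0:ℝ) < 1 - β := by linarith
    positivity
  obtain ⟨r, hr0, hr⟩ := Metric.uniformContinuousOn_iff_le.mp hgu ((1 - β) * δ / M) hε
  refine ⟨min 1 (r / M), lt_min one_pos (by positivity), ?_⟩
  intro x hx s hφs ys hysY d hds hdo lam hlam0 hlam'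
  have hlam1 : lam ≤ 1 := le_trans hlam' (min_le_left _ _)
  have hlamr : lam ≤ r / M := le_trans hlam' (min_le_right _ _)
  have hxX : ∀ i, x i ∈ Xi i := by rw [hX] at hx; exact hx
  have hys : ys ∈ Xi s ∧ ∀ z ∈ Xi s,
      ⟪g x s, ys⟫ + h s ys ≤ ⟪g x s, z⟫ + h s z := by
    rw [hY] at hysY; exact hysY
  -- norm of d
  have hdnorm : ‖d‖ = ‖ys - x s‖ := by
    rw [PiLp.norm_eq_of_L2]
    rw [Finset.sum_eq_single s]
    · rw [hds, Real.sqrt_sq (norm_nonneg _)]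
    · intro i _ hi; rw [hdo i hi]; simp
    · simp
  have hdM : ‖d‖ ≤ M := by
    rw [hdnorm, ← dist_eq_norm]
    have h1 : dist ys (x s) ≤ Metric.diam (Xi s) :=
      Metric.dist_le_diam_of_mem (hXcp s).isBounded hys.1 (hxX s)
    have h2 : Metric.diam (Xi s) ≤ ∑ i, Metric.diam (Xi i) :=
      Finset.single_le_sum (f := fun i => Metric.diam (Xi i))
        (fun i _ => Metric.diam_nonneg) (Finset.mem_univ s)
    linarith
  -- value of φ s x
  have hφval : φ s x = ⟪g x s, x s - ys⟫ + h s (x s) - h s ys := by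
    rw [hφ]
    apply IsGreatest.csSup_eq
    constructor
    · exact ⟨ys, hys.1, rfl⟩
    · rintro _ ⟨z, hz, rfl⟩
      have := hys.2 z hz
      simp only [inner_sub_right]
      linarith
  have hφ0 : 0 < φ s x := lt_of_lt_of_le hδ hφs
  -- points of the segment are in X and close to x
  have hseg : ∀ c : ℝ, c ∈ Set.Icc (0:ℝ) 1 →
      (x + (c * lam) • d ∈ X ∧ dist (x + (c * lam) • d) x ≤ r) := by
    intro c hc
    have hcl0 : 0 ≤ c * lam := mul_nonneg hc.1 hlam0.le
    have hcl1 : c * lam ≤ 1 := by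
      calc c * lam ≤ 1 * lam := by nlinarith [hc.2]
        _ ≤ 1 := by linarith
    constructor
    · rw [hX]
      intro i
      by_cases hi : i = s
      · subst hi
        have : (x + (c * lam) • d) i = x i + (c * lam) • (ys - x i) := by
          simp [hds]
        rw [this]
        exact (hXcv i).add_smul_sub_mem (hxX i) hys.1 ⟨hcl0, hcl1⟩
      · have : (x + (c * lam) • d) i = x i := by
          simp [hdo i hi]
        rw [this]; exact hxX i
    · have : dist (x + (c * lam) • d) x = (c * lam) * ‖d‖ := by
        rw [dist_eq_norm, add_sub_cancel_left, norm_smul, Real.norm_eq_abs,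
          abs_of_nonneg hcl0]
      rw [this]
      calc (c * lam) * ‖d‖ ≤ 1 * lam * M := by
            apply mul_le_mul _ hdM (norm_nonneg d) (by positivity)
            nlinarith [hc.2]
        _ = lam * M := by ring
        _ ≤ (r / M) * M := by nlinarith
        _ = r := by field_simp
  -- mean value estimate on f
  set seg : Set (Tot N) := segment ℝ x (x + lam • d) with hsegdef
  have hseg_param : ∀ z ∈ seg, ∃ c : ℝ, c ∈ Set.Icc (0:ℝ) 1 ∧ z = x + (c * lam) • d := by
    intro z hz
    rw [hsegdef, segment_eq_image'] at hz
    obtain ⟨c, hc, rfl⟩ := hz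
    refine ⟨c, hc, ?_⟩
    show x + c • (x + lam • d - x) = x + (c * lam) • d
    rw [add_sub_cancel_left, smul_smul]
  have hbd : ∀ z ∈ seg,
      ‖(fun w => (InnerProductSpace.toDual ℝ (Tot N)) (g w)) z -
        (InnerProductSpace.toDual ℝ (Tot N)) (g x)‖ ≤ (1 - β) * δ / M := by
    intro z hz
    obtain ⟨c, hc, rfl⟩ := hseg_param z hz
    obtain ⟨hzX, hzd⟩ := hseg c hc
    have heq : (InnerProductSpace.toDual ℝ (Tot N)) (g (x + (c * lam) • d)) -
        (InnerProductSpace.toDual ℝ (Tot N)) (g x) =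
        (InnerProductSpace.toDual ℝ (Tot N)) (g (x + (c * lam) • d) - g x) := by
      simp
    show ‖(InnerProductSpace.toDual ℝ (Tot N)) (g (x + (c * lam) • d)) -
        (InnerProductSpace.toDual ℝ (Tot N)) (g x)‖ ≤ (1 - β) * δ / M
    rw [heq, LinearIsometryEquiv.norm_map, ← dist_eq_norm]
    exact hr _ hzX x hx hzd
  have hfbound : ‖f (x + lam • d) - f x -
      (InnerProductSpace.toDual ℝ (Tot N) (g x)) ((x + lam • d) - x)‖ ≤
      ((1 - β) * δ / M) * ‖(x + lam • d) - x‖ :=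
    (convex_segment x (x + lam • d)).norm_image_sub_le_of_norm_hasFDerivWithin_le'
      (fun z _ => (hf z).hasFDerivAt.hasFDerivWithinAt) hbd
      (left_mem_segment ℝ x (x + lam • d)) (right_mem_segment ℝ x (x + lam • d))
  -- simplify the linear term
  have hinner : (InnerProductSpace.toDual ℝ (Tot N) (g x)) ((x + lam • d) - x) =
      lam * ⟪g x s, ys - x s⟫ := by
    have h1 : (x + lam • d) - x = lam • d := by abel
    rw [h1, InnerProductSpace.toDual_apply_apply, inner_smul_right]
    congr 1
    rw [PiLp.inner_apply, Finset.sum_eq_single s]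
    · rw [hds]
    · intro i _ hi; rw [hdo i hi]; simp
    · simp
  have hnormld : ‖(x + lam • d) - x‖ = lam * ‖d‖ := by
    have h1 : (x + lam • d) - x = lam • d := by abel
    rw [h1, norm_smul, Real.norm_eq_abs, abs_of_nonneg hlam0.le]
  -- bound on f difference
  have hfdiff : f (x + lam • d) - f x ≤
      lam * ⟪g x s, ys - x s⟫ + lam * ((1 - β) * δ) := by
    have := hfbound
    rw [hinner, hnormld] at this
    have h2 : ((1 - β) * δ / M) * (lam * ‖d‖) ≤ lam * ((1 - β) * δ) := by
      calc ((1 - β) * δ / M) * (lam * ‖d‖) ≤ ((1 - β) * δ / M) * (lam * M) := by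
            exact mul_le_mul_of_nonneg_left
              (mul_le_mul_of_nonneg_left hdM hlam0.le) hε.le
        _ = lam * ((1 - β) * δ) := by field_simp
    have h3 := (abs_le.mp (by rwa [Real.norm_eq_abs] at this)).2
    linarith
  -- bound on h difference
  have hhd : (∑ i, h i ((x + lam • d) i)) - ∑ i, h i (x i) ≤
      lam * (h s ys - h s (x s)) := by
    have hsum : ∀ i, i ≠ s → h i ((x + lam • d) i) = h i (x i) := by
      intro i hi
      have : (x + lam • d) i = x i := by simp [hdo i hi]
      rw [this]
    have hsplit : (∑ i, h i ((x + lam • d) i)) - ∑ i, h i (x i) =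
        h s ((x + lam • d) s) - h s (x s) := by
      rw [← Finset.sum_sub_distrib]
      rw [Finset.sum_eq_single s]
      · intro i _ hi; rw [hsum i hi]; ring
      · simp
    rw [hsplit]
    have hxs : (x + lam • d) s = (1 - lam) • x s + lam • ys := by
      have : (x + lam • d) s = x s + lam • (ys - x s) := by simp [hds]
      rw [this]; module
    rw [hxs]
    have := (hhcv s).2 (hxX s) hys.1 (by linarith : (0:ℝ) ≤ 1 - lam) hlam0.le
      (by ring)
    rw [smul_eq_mul, smul_eq_mul] at this
    nlinarith
  -- combine
  have key : μ (x + lam • d) - μ x ≤ -(lam * φ s x) + lam * ((1 - β) * δ) := by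
    rw [hμ, hμ]
    have : lam * ⟪g x s, ys - x s⟫ + lam * (h s ys - h s (x s)) = -(lam * φ s x) := by
      rw [hφval, inner_sub_right, inner_sub_right]; ring
    nlinarith [hfdiff, hhd]
  have hfin : -(lam * φ s x) + lam * ((1 - β) * δ) ≤ -(β * lam * φ s x) := by
    have hp : 0 ≤ (1 - β) * lam * (φ s x - δ) :=
      mul_nonneg (mul_nonneg (by linarith) hlam0.le) (by linarith)
    nlinarith [hp]
  linarith
end
end

section
/- Finite termination of the basic cycle: suppose the gradient map g is uniformly continuous on X and fix δ > 0, β ∈ (0,1), θ ∈ (0,1). Then there is no infinite sequence {x^k} ⊆ X such that for every k there exist s_k ∈ {1,…,n} with φ_{s_k}(x^k) ≥ δ, a point y^k ∈ Y_{s_k}(x^k) defining d^k by d^k_{s_k} = y^k − x^k_{s_k} and d^k_i = 0 for i ≠ s_k, and a stepsize λ_k = θ^{m_k} with m_k the smallest nonnegative integer satisfying μ(x^k + θ^{m_k} d^k) ≤ μ(x^k) − β θ^{m_k} φ_{s_k}(x^k), and x^{k+1} = x^k + λ_k d^k. -/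
open scoped RealInnerProductSpace
open Filter Topology

noncomputable section

lemma lsc_bddBelow_aux {E : Type*} [PseudoMetricSpace E] {s : Set E} (hs : IsCompact s)
    {f : E → ℝ} (hf : LowerSemicontinuousOn f s) : ∃ B : ℝ, ∀ x ∈ s, B ≤ f x := by
  by_contra hc
  push_neg at hc
  choose z hz hfz using fun j : ℕ => hc (-(j : ℝ))
  obtain ⟨w, hw, ψ, hψmono, hψ⟩ := hs.tendsto_subseq hz
  have hT : Filter.Tendsto (fun k => z (ψ k)) atTop (𝓝[s] w) := by
    rw [tendsto_nhdsWithin_iff]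
    exact ⟨hψ, Filter.Eventually.of_forall fun k => hz _⟩
  have h1 := hT.eventually ((hf w hw) (f w - 1) (by linarith))
  obtain ⟨K, hK1, hK2⟩ :=
    (h1.and (Filter.eventually_atTop.2 ⟨Nat.ceil (|f w| + 2), fun b hb => hb⟩)).exists
  have h4 : ((Nat.ceil (|f w| + 2) : ℕ) : ℝ) ≤ (ψ K : ℝ) := by
    exact_mod_cast le_trans hK2 (hψmono.le_apply)
  have h5 : |f w| + 2 ≤ (ψ K : ℝ) := le_trans (Nat.le_ceil _) h4
  have h6 := hfz (ψ K)
  have := neg_abs_le (f w)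
  linarith

lemma mvt_aux {n : ℕ} {N : Fin n → ℕ} (f : Tot N → ℝ) (g : Tot N → Tot N)
    (hf : ∀ p, HasGradientAt f (g p) p) (x d : Tot N) {l : ℝ} (hl : 0 < l) :
    ∃ c ∈ Set.Ioo (0 : ℝ) l, f (x + l • d) - f x = l * ⟪g (x + c • d), d⟫ := by
  have hd : ∀ t : ℝ, HasDerivAt (fun t : ℝ => f (x + t • d)) ⟪g (x + t • d), d⟫ t := by
    intro t
    have hline : HasDerivAt (fun t : ℝ => x + t • d) d t := by
      simpa using ((hasDerivAt_id t).smul_const d).const_add x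
    have := (hf (x + t • d)).hasFDerivAt.comp_hasDerivAt t hline
    simp only [InnerProductSpace.toDual_apply_apply] at this
    exact this
  obtain ⟨c, hc, hceq⟩ := exists_hasDerivAt_eq_slope (fun t : ℝ => f (x + t • d))
    (fun t => ⟪g (x + t • d), d⟫) hl
    (fun t _ => (hd t).continuousAt.continuousWithinAt) (fun t _ => hd t)
  refine ⟨c, hc, ?_⟩
  simp only [zero_smul, add_zero, sub_zero] at hceq
  rw [eq_div_iff hl.ne'] at hceq
  linarith [hceq]

set_option maxHeartbeats 2000000 in
theorem stmt9
    {n : ℕ} {N : Fin n → ℕ}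
    (Xi : ∀ i, Set (Blk N i))
    (hXne : ∀ i, (Xi i).Nonempty)
    (hXcv : ∀ i, Convex ℝ (Xi i))
    (hXcp : ∀ i, IsCompact (Xi i))
    (f : Tot N → ℝ) (g : Tot N → Tot N)
    (hf : ∀ x, HasGradientAt f (g x) x)
    (hg : Continuous g)
    (h : ∀ i, Blk N i → ℝ)
    (hhcv : ∀ i, ConvexOn ℝ (Xi i) (h i))
    (hhlsc : ∀ i, LowerSemicontinuousOn (h i) (Xi i))
    (X : Set (Tot N)) (hX : X = {x | ∀ i, x i ∈ Xi i})
    (μ : Tot N → ℝ) (hμ : ∀ x, μ x = f x + ∑ i, h i (x i))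
    (φ : ∀ i, Tot N → ℝ)
    (hφ : ∀ i x, φ i x =
      sSup ((fun y => ⟪g x i, x i - y⟫ + h i (x i) - h i y) '' Xi i))
    (Y : ∀ i, Tot N → Set (Blk N i))
    (hY : ∀ i x, Y i x = {y ∈ Xi i | ∀ z ∈ Xi i,
      ⟪g x i, y⟫ + h i y ≤ ⟪g x i, z⟫ + h i z})
    (hgu : UniformContinuousOn g X)
    (δ β θ : ℝ) (hδ : 0 < δ) (hβ : β ∈ Set.Ioo (0 : ℝ) 1)
    (hθ : θ ∈ Set.Ioo (0 : ℝ) 1) :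
    ¬ ∃ (x : ℕ → Tot N) (s : ℕ → Fin n) (y : (k : ℕ) → Blk N (s k))
        (d : ℕ → Tot N) (m : ℕ → ℕ),
      (∀ k, x k ∈ X) ∧
      (∀ k, δ ≤ φ (s k) (x k)) ∧
      (∀ k, y k ∈ Y (s k) (x k)) ∧
      (∀ k, d k (s k) = y k - x k (s k)) ∧
      (∀ k i, i ≠ s k → d k i = 0) ∧
      (∀ k, (μ (x k + θ ^ m k • d k) ≤ μ (x k) - β * θ ^ m k * φ (s k) (x k)) ∧
        ∀ m' < m k,
          ¬ (μ (x k + θ ^ m' • d k) ≤ μ (x k) - β * θ ^ m' * φ (s k) (x k))) ∧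
      (∀ k, x (k + 1) = x k + θ ^ m k • d k) := by
  obtain ⟨hβ0, hβ1⟩ := hβ
  obtain ⟨hθ0, hθ1⟩ := hθ
  rintro ⟨x, s, y, d, m, hxX, hφδ, hyY, hds, hdo, harm, hstep⟩
  have hxXi : ∀ k i, x k i ∈ Xi i := by
    intro k i
    have := hxX k; rw [hX] at this; exact this i
  have hyXi : ∀ k, y k ∈ Xi (s k) := by
    intro k; have := hyY k; rw [hY] at this; exact this.1
  have hymin : ∀ k, ∀ z ∈ Xi (s k),
      ⟪g (x k) (s k), y k⟫ + h (s k) (y k) ≤ ⟪g (x k) (s k), z⟫ + h (s k) z := by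
    intro k; have := hyY k; rw [hY] at this; exact this.2
  -- value of φ at the iterates
  have hφval : ∀ k, φ (s k) (x k) =
      ⟪g (x k) (s k), x k (s k) - y k⟫ + h (s k) (x k (s k)) - h (s k) (y k) := by
    intro k
    rw [hφ]
    apply IsGreatest.csSup_eq
    constructor
    · exact ⟨y k, hyXi k, rfl⟩
    · rintro r ⟨z, hz, rfl⟩
      have := hymin k z hz
      simp only [inner_sub_right]
      linarith
  -- membership of perturbed points
  have hmem : ∀ k, ∀ c : ℝ, 0 ≤ c → c ≤ 1 → x k + c • d k ∈ X := by
    intro k c hc0 hc1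
    rw [hX]
    intro i
    by_cases hi : i = s k
    · rw [hi]
      have hblk : (x k + c • d k) (s k) = (1 - c) • x k (s k) + c • y k := by
        have : (x k + c • d k) (s k) = x k (s k) + c • d k (s k) := rfl
        rw [this, hds k]
        module
      rw [hblk]
      exact hXcv (s k) (hxXi k (s k)) (hyXi k) (by linarith) hc0 (by ring)
    · have hblk : (x k + c • d k) i = x k i := by
        simp [PiLp.add_apply, PiLp.smul_apply, hdo k i hi]
      rw [hblk]; exact hxXi k i
  -- compactness of X and bounds
  have hXcpt : IsCompact X := by
    rw [hX]
    have h1 : {x : Tot N | ∀ i, x i ∈ Xi i} = WithLp.toLp 2 '' Set.pi Set.univ Xi := by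
      ext p; exact ⟨fun hp => ⟨WithLp.ofLp p, fun i _ => hp i, rfl⟩, by rintro ⟨q, hq, rfl⟩ i; exact hq i trivial⟩
    rw [h1]
    exact (isCompact_univ_pi hXcp).image (PiLp.continuous_toLp 2 _)
  obtain ⟨R, hR⟩ := isBounded_iff_forall_norm_le.1 hXcpt.isBounded
  have hR0 : 0 ≤ R := le_trans (norm_nonneg _) (hR _ (hxX 0))
  have hdbd : ∀ k, ‖d k‖ ≤ 2 * R := by
    intro k
    have h1 : d k = (x k + (1 : ℝ) • d k) - x k := by simp
    rw [h1]
    calc ‖(x k + (1 : ℝ) • d k) - x k‖ ≤ ‖x k + (1 : ℝ) • d k‖ + ‖x k‖ := norm_sub_le _ _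
    _ ≤ R + R := add_le_add (hR _ (hmem k 1 zero_le_one le_rfl)) (hR _ (hxX k))
    _ = 2 * R := by ring
  -- μ bounded below on X
  have hfc : Continuous f := continuous_iff_continuousAt.2
    fun p => (hf p).differentiableAt.continuousAt
  obtain ⟨p0, hp0X, hp0⟩ := hXcpt.exists_isMinOn ⟨x 0, hxX 0⟩ hfc.continuousOn
  choose Bh hBh using fun i => lsc_bddBelow_aux (hXcp i) (hhlsc i)
  set B : ℝ := f p0 + ∑ i, Bh i with hB
  have hμlb : ∀ p ∈ X, B ≤ μ p := by
    intro p hp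
    rw [hμ, hB]
    have h1 : f p0 ≤ f p := hp0 hp
    have h2 : ∑ i, Bh i ≤ ∑ i, h i (p i) := by
      apply Finset.sum_le_sum
      intro i _
      have := hp; rw [hX] at this
      exact hBh i (p i) (this i)
    linarith
  -- stepsizes tend to zero
  set lam : ℕ → ℝ := fun k => θ ^ m k with hlamdef
  have hlam_pos : ∀ k, 0 < lam k := fun k => pow_pos hθ0 _
  have hβδ : 0 < β * δ := by positivity
  have hdesc : ∀ k, μ (x (k + 1)) ≤ μ (x k) - β * δ * lam k := by
    intro k
    rw [hstep k]
    have h1 := (harm k).1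
    have h2 : β * lam k * δ ≤ β * lam k * φ (s k) (x k) :=
      mul_le_mul_of_nonneg_left (hφδ k) (by positivity)
    have h3 : β * θ ^ m k * φ (s k) (x k) = β * lam k * φ (s k) (x k) := by rfl
    rw [h3] at h1
    linarith
  have hsum : ∀ K, ∑ k ∈ Finset.range K, lam k ≤ (μ (x 0) - B) / (β * δ) := by
    intro K
    have htel : μ (x K) ≤ μ (x 0) - β * δ * ∑ k ∈ Finset.range K, lam k := by
      induction K with
      | zero => simp
      | succ K ih =>
        have := hdesc K
        rw [Finset.sum_range_succ]
        rw [mul_add]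
        linarith
    have hlb := hμlb (x K) (hxX K)
    rw [le_div_iff₀ hβδ]
    nlinarith [htel, hlb]
  have hlam0 : Tendsto lam atTop (𝓝 0) :=
    (summable_of_sum_range_le (fun k => (hlam_pos k).le) hsum).tendsto_atTop_zero
  -- eventually m k ≥ 1
  have hm1 : ∀ᶠ k in atTop, 1 ≤ m k := by
    filter_upwards [hlam0.eventually_lt_const one_pos] with k hk
    by_contra hcon
    have : m k = 0 := by omega
    rw [hlamdef] at hk
    simp only [this, pow_zero] at hk
    exact lt_irrefl 1 hk
  have hlam'0 : Tendsto (fun k => θ ^ (m k - 1)) atTop (𝓝 0) := by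
    have h1 : Tendsto (fun k => lam k / θ) atTop (𝓝 0) := by
      simpa using hlam0.div_const θ
    apply h1.congr'
    filter_upwards [hm1] with k hk
    have hlk : lam k = θ ^ (m k - 1) * θ := by
      show θ ^ m k = θ ^ (m k - 1) * θ
      rw [← pow_succ]
      congr 1
      omega
    rw [div_eq_iff hθ0.ne', hlk]
  -- uniform continuity setup
  set ε : ℝ := (1 - β) * δ / (2 * R + 1) with hε
  have hεpos : 0 < ε := by
    apply div_pos (by nlinarith) (by linarith)
  obtain ⟨η, hη0, hη⟩ := (Metric.uniformContinuousOn_iff.1 hgu) ε hεpos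
  have hev : ∀ᶠ k in atTop, θ ^ (m k - 1) * (2 * R + 1) < η ∧ 1 ≤ m k := by
    have h2 : Tendsto (fun k => θ ^ (m k - 1) * (2 * R + 1)) atTop (𝓝 0) := by
      simpa using hlam'0.mul_const (2 * R + 1)
    exact (h2.eventually_lt_const hη0).and hm1
  obtain ⟨K, hKsmall, hKm⟩ := hev.exists
  -- the contradiction at index K
  set L : ℝ := θ ^ (m K - 1) with hL
  have hLpos : 0 < L := pow_pos hθ0 _
  have hL1 : L ≤ 1 := pow_le_one₀ hθ0.le hθ1.le
  obtain ⟨c, hc, hmvt⟩ := mvt_aux f g hf (x K) (d K) hLpos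
  have hcL1 : c ≤ 1 := le_trans hc.2.le hL1
  have hξX : x K + c • d K ∈ X := hmem K c hc.1.le hcL1
  have hdist : dist (x K + c • d K) (x K) < η := by
    rw [dist_eq_norm]
    have h1 : x K + c • d K - x K = c • d K := by abel
    rw [h1, norm_smul, Real.norm_eq_abs, abs_of_pos hc.1]
    calc c * ‖d K‖ ≤ L * (2 * R) :=
          mul_le_mul hc.2.le (hdbd K) (norm_nonneg _) hLpos.le
    _ ≤ L * (2 * R + 1) := by nlinarith
    _ < η := hKsmall
  have hgdist : ‖g (x K + c • d K) - g (x K)‖ < ε := by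
    rw [← dist_eq_norm]
    exact hη _ hξX _ (hxX K) hdist
  -- key inequalities
  set r : ℝ := ⟪g (x K + c • d K) - g (x K), d K⟫ with hrdef
  have hrle : r ≤ (1 - β) * δ := by
    have h1 : r ≤ ‖g (x K + c • d K) - g (x K)‖ * ‖d K‖ := real_inner_le_norm _ _
    have h2 : ‖g (x K + c • d K) - g (x K)‖ * ‖d K‖ ≤ ε * (2 * R + 1) :=
      mul_le_mul hgdist.le (by linarith [hdbd K]) (norm_nonneg _) hεpos.le
    have h3 : ε * (2 * R + 1) = (1 - β) * δ := by
      rw [hε]; field_simp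
    linarith
  have hin : ⟪g (x K), d K⟫ = ⟪g (x K) (s K), y K - x K (s K)⟫ := by
    rw [PiLp.inner_apply]
    rw [Finset.sum_eq_single (s K)]
    · rw [hds K]
    · intro i _ hi
      rw [hdo K i hi, inner_zero_right]
    · intro habs; exact absurd (Finset.mem_univ _) habs
  have hΔf : f (x K + L • d K) - f (x K) =
      L * (⟪g (x K) (s K), y K - x K (s K)⟫ + r) := by
    rw [hmvt, hrdef, inner_sub_left, hin]
    ring
  -- h-part
  have hblkL : (x K + L • d K) (s K) = (1 - L) • x K (s K) + L • y K := by
    simp only [PiLp.add_apply, PiLp.smul_apply, hds K]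
    module
  have hμdiff : μ (x K + L • d K) - μ (x K) =
      (f (x K + L • d K) - f (x K)) +
      (h (s K) ((x K + L • d K) (s K)) - h (s K) (x K (s K))) := by
    rw [hμ, hμ]
    have h1 : ∑ i, h i ((x K + L • d K) i) - ∑ i, h i (x K i) =
        h (s K) ((x K + L • d K) (s K)) - h (s K) (x K (s K)) := by
      rw [← Finset.sum_sub_distrib]
      rw [Finset.sum_eq_single (s K)]
      · intro i _ hi
        have : (x K + L • d K) i = x K i := by
          simp [PiLp.add_apply, PiLp.smul_apply, hdo K i hi]
        rw [this, sub_self]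
      · intro habs; exact absurd (Finset.mem_univ _) habs
    linarith
  have hhcvx : h (s K) ((1 - L) • x K (s K) + L • y K) ≤
      (1 - L) * h (s K) (x K (s K)) + L * h (s K) (y K) := by
    have h2 := (hhcv (s K)).2
    have := h2 (hxXi K (s K)) (hyXi K) (show (0:ℝ) ≤ 1 - L by linarith) hLpos.le
      (by ring : (1 - L) + L = 1)
    simpa [smul_eq_mul] using this
  -- assemble
  have hfail := (harm K).2 (m K - 1) (by omega)
  apply hfail
  have hφK := hφδ K
  have hφv := hφval K
  have hμd := hμdiff
  rw [hblkL] at hμd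
  have hinner_split : ⟪g (x K) (s K), x K (s K) - y K⟫ =
      -⟪g (x K) (s K), y K - x K (s K)⟫ := by
    rw [← inner_neg_right]; congr 1; abel
  set A : ℝ := ⟪g (x K) (s K), y K - x K (s K)⟫ with hA
  set P : ℝ := φ (s K) (x K) with hP
  set Hx : ℝ := h (s K) (x K (s K)) with hHx
  set Hy : ℝ := h (s K) (y K) with hHy
  -- hφv : P = -A + Hx - Hy
  rw [hinner_split] at hφv
  -- goal: μ (x K + θ^(m K - 1) • d K) ≤ μ (x K) - β * θ^(m K - 1) * P
  show μ (x K + L • d K) ≤ μ (x K) - β * L * P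
  have e1 : μ (x K + L • d K) - μ (x K) ≤ L * (A + r) + (((1 - L) * Hx + L * Hy) - Hx) := by
    rw [hμd, hΔf]
    linarith [hhcvx]
  have e2 : L * (A + r) + (((1 - L) * Hx + L * Hy) - Hx) = L * (A + Hy - Hx) + L * r := by
    ring
  have e3 : A + Hy - Hx = -P := by linarith [hφv]
  have e4 : L * r ≤ L * ((1 - β) * δ) := mul_le_mul_of_nonneg_left hrle hLpos.le
  have e5 : L * ((1 - β) * δ) ≤ L * ((1 - β) * P) := by
    apply mul_le_mul_of_nonneg_left _ hLpos.le
    apply mul_le_mul_of_nonneg_left hφK (by linarith)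
  nlinarith [e1, e2, e3, e4, e5]
end
end

section
/- Convergence of the upper-level method: let {δ_l} be a sequence of positive numbers decreasing to 0, and let {z^l} ⊆ X satisfy φ_i(z^l) ≤ δ_l for all i = 1,…,n and all l ≥ 1. Then {z^l} has limit points, and every limit point z̄ is a stationary point, i.e. Σ_{i=1}^n [⟨g_i(z̄), y_i − z̄_i⟩ + h_i(y_i) − h_i(z̄_i)] ≥ 0 for all y ∈ X. If moreover f is convex, then lim_{l→∞} μ(z^l) = μ* and every limit point of {z^l} minimizes μ over X. -/
open scoped RealInnerProductSpace
open Filter Topology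

noncomputable section

private lemma lsc_bddBelow {α : Type*} [TopologicalSpace α] {s : Set α} {h : α → ℝ}
    (hs : IsCompact s) (hl : LowerSemicontinuousOn h s) : BddBelow (h '' s) := by
  refine hs.induction_on (p := fun t => BddBelow (h '' t)) (by simp) ?_ ?_ ?_
  · intro u t hut ht
    exact ht.mono (Set.image_mono hut)
  · intro u t hu ht
    rw [Set.image_union]; exact hu.union ht
  · intro x hx
    refine ⟨{y | h x - 1 < h y}, hl x hx (h x - 1) (by linarith), ⟨h x - 1, ?_⟩⟩
    rintro v ⟨y, hy, rfl⟩
    exact le_of_lt hy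

private lemma grad_convex_ineq {E : Type*} [NormedAddCommGroup E] [InnerProductSpace ℝ E]
    [CompleteSpace E] {f : E → ℝ} {G x : E} (hc : ConvexOn ℝ Set.univ f)
    (hf : HasGradientAt f G x) (y : E) :
    ⟪G, y - x⟫ ≤ f y - f x := by
  set γ : ℝ → E := fun t => t • (y - x) + x with hγdef
  have hγ0 : γ 0 = x := by simp [hγdef]
  have hγ1 : γ 1 = y := by simp [hγdef]
  have hγψ : ∀ t, (AffineMap.lineMap x y : ℝ →ᵃ[ℝ] E) t = γ t := by
    intro t
    simp [AffineMap.lineMap_apply, hγdef]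
  have hconv : ConvexOn ℝ Set.univ (f ∘ γ) := by
    have h1 := hc.comp_affineMap (AffineMap.lineMap x y : ℝ →ᵃ[ℝ] E)
    rw [Set.preimage_univ] at h1
    have : (f ∘ (AffineMap.lineMap x y : ℝ →ᵃ[ℝ] E)) = f ∘ γ := by
      funext t; simp [Function.comp, hγψ t]
    rwa [this] at h1
  have hγd : HasDerivAt γ (y - x) 0 := by
    have h1 : HasDerivAt (fun t : ℝ => t • (y - x)) ((1 : ℝ) • (y - x)) 0 :=
      (hasDerivAt_id (0 : ℝ)).smul_const (y - x)
    simpa [hγdef] using h1.add_const x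
  have hF : HasFDerivAt f (InnerProductSpace.toDual ℝ E G) (γ 0) := by
    rw [hγ0]; exact hf.hasFDerivAt
  have hder : HasDerivAt (f ∘ γ) ⟪G, y - x⟫ 0 := by
    have := hF.comp_hasDerivAt 0 hγd
    simpa [InnerProductSpace.toDual_apply_apply] using this
  have hslope := hconv.le_slope_of_hasDerivAt (Set.mem_univ 0) (Set.mem_univ 1)
    one_pos hder
  have : slope (f ∘ γ) 0 1 = f y - f x := by
    simp [slope, hγ0, hγ1]
  linarith [hslope.trans_eq this]

theorem stmt10
    {n : ℕ} {N : Fin n → ℕ}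
    (Xi : ∀ i, Set (Blk N i))
    (hXne : ∀ i, (Xi i).Nonempty)
    (hXcv : ∀ i, Convex ℝ (Xi i))
    (hXcp : ∀ i, IsCompact (Xi i))
    (f : Tot N → ℝ) (g : Tot N → Tot N)
    (hf : ∀ x, HasGradientAt f (g x) x)
    (hg : Continuous g)
    (h : ∀ i, Blk N i → ℝ)
    (hhcv : ∀ i, ConvexOn ℝ (Xi i) (h i))
    (hhlsc : ∀ i, LowerSemicontinuousOn (h i) (Xi i))
    (X : Set (Tot N)) (hX : X = {x | ∀ i, x i ∈ Xi i})
    (μ : Tot N → ℝ) (hμ : ∀ x, μ x = f x + ∑ i, h i (x i))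
    (φ : ∀ i, Tot N → ℝ)
    (hφ : ∀ i x, φ i x =
      sSup ((fun y => ⟪g x i, x i - y⟫ + h i (x i) - h i y) '' Xi i))
    (δ : ℕ → ℝ) (hδpos : ∀ l, 0 < δ l) (hδanti : Antitone δ)
    (hδ0 : Tendsto δ atTop (𝓝 0))
    (z : ℕ → Tot N) (hz : ∀ l, z l ∈ X)
    (hzφ : ∀ l i, φ i (z l) ≤ δ l) :
    (∃ zb, MapClusterPt zb atTop z) ∧
    (∀ zb, MapClusterPt zb atTop z →
      zb ∈ X ∧
        ∀ y ∈ X, 0 ≤ ∑ i, (⟪g zb i, y i - zb i⟫ + h i (y i) - h i (zb i))) ∧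
    (ConvexOn ℝ Set.univ f →
      Tendsto (fun l => μ (z l)) atTop (𝓝 (sInf (μ '' X))) ∧
        ∀ zb, MapClusterPt zb atTop z → ∀ y ∈ X, μ zb ≤ μ y) := by
  -- projections are continuous
  have hproj : ∀ i, Continuous fun x : Tot N => x i := fun i =>
    (continuous_apply i).comp (PiLp.continuous_ofLp 2 _)
  -- X is compact
  have hKc : IsCompact X := by
    rw [hX]
    have h1 : IsCompact (Set.univ.pi Xi) := isCompact_univ_pi hXcp
    have h2 := h1.image (PiLp.continuous_toLp 2
      (fun i => EuclideanSpace ℝ (Fin (N i))))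
    convert h2 using 1
    ext x
    constructor
    · intro hx
      exact ⟨x.ofLp, fun i _ => hx i, rfl⟩
    · rintro ⟨y, hy, rfl⟩ i
      exact hy i (Set.mem_univ i)
  -- membership facts
  have hmem : ∀ x, x ∈ X → ∀ i, x i ∈ Xi i := by
    intro x hx i; rw [hX] at hx; exact hx i
  have hmem' : ∀ x, (∀ i, x i ∈ Xi i) → x ∈ X := by
    intro x hx; rw [hX]; exact hx
  -- lower bounds for h i on Xi i
  have hbb : ∀ i, BddBelow (h i '' Xi i) := fun i =>
    lsc_bddBelow (hXcp i) (hhlsc i)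
  choose m hm using fun i => (hbb i)
  have hm' : ∀ i, ∀ v ∈ Xi i, m i ≤ h i v := by
    intro i v hv; exact hm i (Set.mem_image_of_mem _ hv)
  -- σ ≤ φ
  have hσφ : ∀ x i, ∀ v ∈ Xi i,
      ⟪g x i, x i - v⟫ + h i (x i) - h i v ≤ φ i x := by
    intro x i v hv
    rw [hφ]
    refine le_csSup ?_ (Set.mem_image_of_mem _ hv)
    obtain ⟨w, hw, hwmax⟩ := (hXcp i).exists_isMaxOn (hXne i)
      ((continuous_const.inner (continuous_const.sub continuous_id)).continuousOn :
        ContinuousOn (fun v => ⟪g x i, x i - v⟫) (Xi i))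
    refine ⟨⟪g x i, x i - w⟫ + h i (x i) - m i, ?_⟩
    rintro r ⟨v', hv', rfl⟩
    have h1 : ⟪g x i, x i - v'⟫ ≤ ⟪g x i, x i - w⟫ := by simpa using hwmax hv'
    have h2 := hm' i v' hv'
    dsimp only
    linarith
  have hkey : ∀ l i, ∀ v ∈ Xi i,
      ⟪g (z l) i, z l i - v⟫ + h i (z l i) - h i v ≤ δ l := fun l i v hv =>
    (hσφ (z l) i v hv).trans (hzφ l i)
  -- existence of cluster points
  obtain ⟨zb₀, hzb₀X, hzb₀⟩ := hKc.exists_mapClusterPt (u := z) (f := atTop)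
    (le_principal_iff.mpr (mem_map.mpr (Eventually.of_forall hz)))
  -- main facts about an arbitrary cluster point
  have hmain : ∀ zb, MapClusterPt zb atTop z →
      zb ∈ X ∧ (atTop ⊓ comap z (𝓝 zb)).NeBot ∧
        Tendsto z (atTop ⊓ comap z (𝓝 zb)) (𝓝 zb) := by
    intro zb hzb
    have hclX : zb ∈ X := by
      have hle : map z atTop ≤ 𝓟 X := le_principal_iff.mpr
        (mem_map.mpr (Eventually.of_forall hz))
      have : ClusterPt zb (𝓟 X) := hzb.clusterPt.mono hle
      exact hKc.isClosed.closure_eq ▸ mem_closure_iff_clusterPt.mpr this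
    have hNB : (atTop ⊓ comap z (𝓝 zb)).NeBot := by
      apply Filter.NeBot.of_map (m := z)
      rw [Filter.push_pull]
      exact (inf_comm (𝓝 zb) (map z atTop)) ▸ hzb.clusterPt.neBot
    exact ⟨hclX, hNB, tendsto_comap.mono_left inf_le_right⟩
  -- part 2 : stationarity
  have hstat : ∀ zb, MapClusterPt zb atTop z →
      zb ∈ X ∧
        ∀ y ∈ X, 0 ≤ ∑ i, (⟪g zb i, y i - zb i⟫ + h i (y i) - h i (zb i)) := by
    intro zb hzb
    obtain ⟨hzbX, hNB, hzL⟩ := hmain zb hzb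
    refine ⟨hzbX, fun y hy => Finset.sum_nonneg fun i _ => ?_⟩
    have hswap : ⟪g zb i, y i - zb i⟫ = -⟪g zb i, zb i - y i⟫ := by
      rw [← neg_sub, inner_neg_right]
    rw [hswap]
    have hsuff : ∀ ε > (0:ℝ),
        -⟪g zb i, zb i - y i⟫ + h i (y i) - h i (zb i) + ε ≥ 0 := by
      intro ε hε
      set L := atTop ⊓ comap z (𝓝 zb)
      have hδL : Tendsto δ L (𝓝 0) := hδ0.mono_left inf_le_left
      have hziL : Tendsto (fun l => z l i) L (𝓝[Xi i] (zb i)) := by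
        rw [tendsto_nhdsWithin_iff]
        exact ⟨((hproj i).tendsto zb).comp hzL,
          Eventually.of_forall fun l => hmem (z l) (hz l) i⟩
      have hlsc : ∀ᶠ l in L, h i (zb i) - ε < h i (z l i) :=
        hziL.eventually (hhlsc i (zb i) (hmem zb hzbX i) (h i (zb i) - ε)
          (by linarith))
      have hbound : ∀ᶠ l in L,
          ⟪g (z l) i, z l i - y i⟫ + (h i (zb i) - ε) - h i (y i) ≤ δ l := by
        filter_upwards [hlsc] with l hl
        have := hkey l i (y i) (hmem y hy i)
        linarith
      have hTcont : Continuous fun x : Tot N => ⟪g x i, x i - y i⟫ :=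
        ((hproj i).comp hg).inner ((hproj i).sub continuous_const)
      have hT : Tendsto (fun l => ⟪g (z l) i, z l i - y i⟫) L
          (𝓝 ⟪g zb i, zb i - y i⟫) := (hTcont.tendsto zb).comp hzL
      have hlim : Tendsto
          (fun l => ⟪g (z l) i, z l i - y i⟫ + (h i (zb i) - ε) - h i (y i)) L
          (𝓝 (⟪g zb i, zb i - y i⟫ + (h i (zb i) - ε) - h i (y i))) := by
        exact (hT.add_const _).sub_const _
      have := le_of_tendsto_of_tendsto hlim hδL hbound
      linarith
    by_contra hcon
    push_neg at hcon
    have := hsuff (-(-⟪g zb i, zb i - y i⟫ + h i (y i) - h i (zb i)) / 2)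
      (by linarith)
    linarith
  refine ⟨⟨zb₀, hzb₀⟩, hstat, ?_⟩
  -- part 3 : convex case
  intro hcvx
  have hXne' : X.Nonempty := by
    refine ⟨(WithLp.equiv 2 _).symm (fun i => (hXne i).choose), hmem' _ fun i => ?_⟩
    exact (hXne i).choose_spec
  have hfc : Continuous f := continuous_iff_continuousAt.2 fun x =>
    (hf x).hasFDerivAt.continuousAt
  -- μ bounded below on X
  obtain ⟨xf, hxfX, hminf⟩ := hKc.exists_isMinOn hXne' hfc.continuousOn
  have hbddμ : BddBelow (μ '' X) := by
    refine ⟨f xf + ∑ i, m i, ?_⟩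
    rintro r ⟨x, hx, rfl⟩
    rw [hμ]
    have h1 : f xf ≤ f x := hminf hx
    have h2 : ∑ i, m i ≤ ∑ i, h i (x i) :=
      Finset.sum_le_sum fun i _ => hm' i (x i) (hmem x hx i)
    linarith
  -- key chain inequality
  have hchain : ∀ l, ∀ y ∈ X, μ (z l) ≤ μ y + n * δ l := by
    intro l y hy
    have hgrad := grad_convex_ineq hcvx (hf (z l)) y
    have hinner : ⟪g (z l), y - z l⟫ = ∑ i, ⟪g (z l) i, y i - z l i⟫ := by
      rw [PiLp.inner_apply]
      rfl
    have hterm : ∀ i ∈ Finset.univ, -δ l ≤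
        ⟪g (z l) i, y i - z l i⟫ + h i (y i) - h i (z l i) := by
      intro i _
      have hk := hkey l i (y i) (hmem y hy i)
      have hsw : ⟪g (z l) i, y i - z l i⟫ = -⟪g (z l) i, z l i - y i⟫ := by
        rw [← neg_sub, inner_neg_right]
      linarith
    have hsum := Finset.sum_le_sum hterm
    rw [Finset.sum_const, Finset.card_univ, Fintype.card_fin, nsmul_eq_mul] at hsum
    have hsplit : ∑ i, (⟪g (z l) i, y i - z l i⟫ + h i (y i) - h i (z l i)) =
        (∑ i, ⟪g (z l) i, y i - z l i⟫) + ((∑ i, h i (y i)) - ∑ i, h i (z l i)) := by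
      rw [← Finset.sum_sub_distrib, ← Finset.sum_add_distrib]
      congr 1; funext i; ring
    rw [hsplit] at hsum
    rw [hμ, hμ]
    rw [hinner] at hgrad
    have : (n : ℝ) * -δ l = -(n * δ l) := by ring
    rw [this] at hsum
    linarith
  have hlow : ∀ l, sInf (μ '' X) ≤ μ (z l) := fun l =>
    csInf_le hbddμ ⟨z l, hz l, rfl⟩
  have hhigh : ∀ l, μ (z l) ≤ sInf (μ '' X) + n * δ l := by
    intro l
    have : μ (z l) - n * δ l ≤ sInf (μ '' X) := by
      refine le_csInf (hXne'.image μ) ?_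
      rintro r ⟨y, hy, rfl⟩
      linarith [hchain l y hy]
    linarith
  constructor
  · refine tendsto_of_tendsto_of_tendsto_of_le_of_le tendsto_const_nhds ?_ hlow hhigh
    have h2 : Tendsto (fun l => sInf (μ '' X) + (n : ℝ) * δ l) atTop
        (𝓝 (sInf (μ '' X) + (n : ℝ) * 0)) :=
      tendsto_const_nhds.add (hδ0.const_mul (n : ℝ))
    simpa using h2
  · intro zb hzb y hy
    obtain ⟨hzbX, hNB, hzL⟩ := hmain zb hzb
    refine le_of_forall_pos_le_add fun ε hε => ?_
    set L := atTop ⊓ comap z (𝓝 zb)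
    have hδL : Tendsto δ L (𝓝 0) := hδ0.mono_left inf_le_left
    have hεn : (0:ℝ) < ε / (n + 1) := by positivity
    have hlsc : ∀ᶠ l in L, ∀ i, h i (zb i) - ε / (n + 1) < h i (z l i) := by
      rw [eventually_all]
      intro i
      have hziL : Tendsto (fun l => z l i) L (𝓝[Xi i] (zb i)) := by
        rw [tendsto_nhdsWithin_iff]
        exact ⟨((hproj i).tendsto zb).comp hzL,
          Eventually.of_forall fun l => hmem (z l) (hz l) i⟩
      exact hziL.eventually (hhlsc i (zb i) (hmem zb hzbX i)
        (h i (zb i) - ε / (n + 1)) (by linarith))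
    have hnε : (n : ℝ) * (ε / (n + 1)) ≤ ε := by
      have h1 : (n : ℝ) * (ε / (n + 1)) ≤ ((n : ℝ) + 1) * (ε / (n + 1)) := by
        have : (n : ℝ) ≤ (n : ℝ) + 1 := by linarith
        exact mul_le_mul_of_nonneg_right this hεn.le
      have h2 : ((n : ℝ) + 1) * (ε / (n + 1)) = ε := by
        field_simp
      linarith
    have hbound : ∀ᶠ l in L, f (z l) + ((∑ i, h i (zb i)) - ε) ≤ μ y + n * δ l := by
      filter_upwards [hlsc] with l hl
      have h1 : ∑ i, (h i (zb i) - ε / (n + 1)) ≤ ∑ i, h i (z l i) :=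
        Finset.sum_le_sum fun i _ => (hl i).le
      rw [Finset.sum_sub_distrib, Finset.sum_const, Finset.card_univ,
        Fintype.card_fin, nsmul_eq_mul] at h1
      have h2 := hchain l y hy
      rw [hμ (z l)] at h2
      linarith
    have hlim : Tendsto (fun l => f (z l) + ((∑ i, h i (zb i)) - ε)) L
        (𝓝 (f zb + ((∑ i, h i (zb i)) - ε))) :=
      (((hfc.tendsto zb).comp hzL).add_const _)
    have hlim2 : Tendsto (fun l => μ y + n * δ l) L (𝓝 (μ y + n * 0)) :=
      tendsto_const_nhds.add (hδL.const_mul _)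
    have := le_of_tendsto_of_tendsto hlim hlim2 hbound
    rw [hμ zb]
    simp only [mul_zero, add_zero] at this
    linarith
end
end

section
/- Block-Lipschitz descent with pre-defined stepsize: suppose the partial gradients satisfy ‖g_i(x + d^{(i)}) − g_i(x)‖ ≤ L_i ‖d_i‖ for all x and all d, where d^{(i)} has i-th block d_i and zero in all other blocks. Let β ∈ (0,1), x ∈ X, i ∈ {1,…,n}, y_i(x) ∈ Y_i(x), and set d_i = y_i(x) − x_i with d_i ≠ 0. Then for every λ ∈ [0, 1] with λ ≤ 2(1−β) φ_i(x) / (L_i ‖d_i‖²), it holds that μ(x + λ d^{(i)}) − μ(x) ≤ −β λ φ_i(x). -/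
open scoped RealInnerProductSpace
open Filter Topology

noncomputable section

set_option maxHeartbeats 1000000 in
theorem stmt11
    {n : ℕ} {N : Fin n → ℕ}
    (Xi : ∀ i, Set (Blk N i))
    (hXne : ∀ i, (Xi i).Nonempty)
    (hXcv : ∀ i, Convex ℝ (Xi i))
    (hXcp : ∀ i, IsCompact (Xi i))
    (f : Tot N → ℝ) (g : Tot N → Tot N)
    (hf : ∀ x, HasGradientAt f (g x) x)
    (hg : Continuous g)
    (h : ∀ i, Blk N i → ℝ)
    (hhcv : ∀ i, ConvexOn ℝ (Xi i) (h i))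
    (hhlsc : ∀ i, LowerSemicontinuousOn (h i) (Xi i))
    (X : Set (Tot N)) (hX : X = {x | ∀ i, x i ∈ Xi i})
    (μ : Tot N → ℝ) (hμ : ∀ x, μ x = f x + ∑ i, h i (x i))
    (φ : ∀ i, Tot N → ℝ)
    (hφ : ∀ i x, φ i x =
      sSup ((fun y => ⟪g x i, x i - y⟫ + h i (x i) - h i y) '' Xi i))
    (Y : ∀ i, Tot N → Set (Blk N i))
    (hY : ∀ i x, Y i x = {y ∈ Xi i | ∀ z ∈ Xi i,
      ⟪g x i, y⟫ + h i y ≤ ⟪g x i, z⟫ + h i z})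
    (Li : Fin n → ℝ) (hLipos : ∀ i, 0 < Li i)
    (hLi : ∀ (i : Fin n) (x d : Tot N), (∀ j, j ≠ i → d j = 0) →
      ‖g (x + d) i - g x i‖ ≤ Li i * ‖d i‖)
    (β : ℝ) (hβ : β ∈ Set.Ioo (0 : ℝ) 1)
    (x : Tot N) (hx : x ∈ X) (i : Fin n)
    (yi : Blk N i) (hyi : yi ∈ Y i x)
    (d : Tot N) (hdi : d i = yi - x i) (hd0 : ∀ j, j ≠ i → d j = 0)
    (hdne : d i ≠ 0)
    (lam : ℝ) (hlam0 : 0 ≤ lam) (hlam1 : lam ≤ 1)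
    (hlam : lam ≤ 2 * (1 - β) * φ i x / (Li i * ‖d i‖ ^ 2)) :
    μ (x + lam • d) - μ x ≤ -(β * lam * φ i x) := by

  obtain ⟨hβ0, hβ1⟩ := hβ
  have hxiX : x i ∈ Xi i := by rw [hX] at hx; exact hx i
  have hyiY := hyi
  rw [hY] at hyiY
  obtain ⟨hyiXi, hyimin⟩ := hyiY
  -- value of φ i x
  have hφval : φ i x = ⟪g x i, x i - yi⟫ + h i (x i) - h i yi := by
    rw [hφ]
    apply IsGreatest.csSup_eq
    constructor
    · exact ⟨yi, hyiXi, rfl⟩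
    · rintro v ⟨z, hz, rfl⟩
      have := hyimin z hz
      simp only [inner_sub_right]
      linarith
  -- the sum over blocks collapses to block i
  have hμdiff : μ (x + lam • d) - μ x
      = f (x + lam • d) - f x + (h i (x i + lam • d i) - h i (x i)) := by
    rw [hμ, hμ]
    have hsum : ∑ j, h j ((x + lam • d) j) - ∑ j, h j (x j)
        = h i (x i + lam • d i) - h i (x i) := by
      rw [← Finset.sum_sub_distrib, Finset.sum_eq_single i]
      · rfl
      · intro j _ hj
        have : (x + lam • d) j = x j := by
          show x j + lam • d j = x j
          rw [hd0 j hj, smul_zero, add_zero]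
        rw [this]; ring
      · simp
    linarith [hsum]
  -- convexity of h i
  have hpt : x i + lam • d i = (1 - lam) • x i + lam • yi := by
    rw [hdi]; module
  have hconv : h i (x i + lam • d i) ≤ (1 - lam) * h i (x i) + lam * h i yi := by
    rw [hpt]
    exact (hhcv i).2 hxiX hyiXi (by linarith) hlam0 (by ring)
  -- inner product on the product space collapses to block i
  have hinner : ∀ y : Tot N, ⟪y, d⟫ = ⟪y i, d i⟫ := by
    intro y
    rw [PiLp.inner_apply, Finset.sum_eq_single i]
    · intro j _ hj; rw [hd0 j hj, inner_zero_right]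
    · simp
  -- derivative along the line
  have hFderiv : ∀ t : ℝ, HasDerivAt (fun s : ℝ => f (x + s • d)) ⟪g (x + t • d), d⟫ t := by
    intro t
    have hline : HasDerivAt (fun s : ℝ => x + s • d) d t := by
      simpa using ((hasDerivAt_id t).smul_const d).const_add x
    have hfd := (hf (x + t • d)).hasFDerivAt
    have := hfd.comp_hasDerivAt t hline
    simp at this
    exact this
  have hF'cont : Continuous fun t : ℝ => ⟪g (x + t • d), d⟫ :=
    Continuous.inner (hg.comp (continuous_const.add (continuous_id'.smul continuous_const))) continuous_const
  have hFTC : ∫ t in (0:ℝ)..lam, ⟪g (x + t • d), d⟫ = f (x + lam • d) - f x := by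
    have := intervalIntegral.integral_eq_sub_of_hasDerivAt
      (fun t _ => hFderiv t) (hF'cont.intervalIntegrable 0 lam)
    simpa using this
  -- pointwise bound on the derivative
  have hbound : ∀ t ∈ Set.Icc (0:ℝ) lam,
      ⟪g (x + t • d), d⟫ ≤ ⟪g x i, d i⟫ + Li i * ‖d i‖ ^ 2 * t := by
    intro t ht
    have h1 : ⟪g (x + t • d), d⟫ = ⟪g x i, d i⟫ + ⟪g (x + t • d) i - g x i, d i⟫ := by
      rw [hinner, inner_sub_left]; ring
    rw [h1]
    have h2 : ⟪g (x + t • d) i - g x i, d i⟫ ≤ ‖g (x + t • d) i - g x i‖ * ‖d i‖ :=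
      real_inner_le_norm _ _
    have h3 : ‖g (x + t • d) i - g x i‖ ≤ Li i * ‖(t • d) i‖ :=
      hLi i x (t • d) (fun j hj => by
        show t • d j = 0
        rw [hd0 j hj, smul_zero])
    have h4 : ‖(t • d) i‖ = t * ‖d i‖ := by
      show ‖t • d i‖ = t * ‖d i‖
      rw [norm_smul, Real.norm_eq_abs, abs_of_nonneg ht.1]
    have h5 : ⟪g (x + t • d) i - g x i, d i⟫ ≤ Li i * ‖d i‖ ^ 2 * t :=
      calc ⟪g (x + t • d) i - g x i, d i⟫ ≤ ‖g (x + t • d) i - g x i‖ * ‖d i‖ := h2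
        _ ≤ (Li i * ‖(t • d) i‖) * ‖d i‖ := mul_le_mul_of_nonneg_right h3 (norm_nonneg _)
        _ = Li i * ‖d i‖ ^ 2 * t := by rw [h4]; ring
    linarith
  have hint : ∫ t in (0:ℝ)..lam, (⟪g x i, d i⟫ + Li i * ‖d i‖ ^ 2 * t)
      = lam * ⟪g x i, d i⟫ + Li i * ‖d i‖ ^ 2 * lam ^ 2 / 2 := by
    rw [intervalIntegral.integral_add (f := fun _ => ⟪g x i, d i⟫)
      (g := fun t : ℝ => Li i * ‖d i‖ ^ 2 * t) intervalIntegrable_const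
      ((continuous_const.mul continuous_id').intervalIntegrable 0 lam),
      intervalIntegral.integral_const, intervalIntegral.integral_const_mul,
      integral_id]
    simp only [smul_eq_mul]
    ring
  have hfle : f (x + lam • d) - f x ≤ lam * ⟪g x i, d i⟫ + Li i * ‖d i‖ ^ 2 * lam ^ 2 / 2 := by
    rw [← hFTC, ← hint]
    exact intervalIntegral.integral_mono_on hlam0 (hF'cont.intervalIntegrable _ _)
      ((continuous_const.add (continuous_const.mul continuous_id')).intervalIntegrable _ _) hbound
  have hphinn : ⟪g x i, d i⟫ = -⟪g x i, x i - yi⟫ := by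
    rw [hdi, inner_sub_right, inner_sub_right]; ring
  have hLd : 0 < Li i * ‖d i‖ ^ 2 := by
    have hdpos : 0 < ‖d i‖ := norm_pos_iff.mpr hdne
    exact mul_pos (hLipos i) (pow_pos hdpos 2)
  have hkey : Li i * ‖d i‖ ^ 2 * lam ^ 2 / 2 ≤ (1 - β) * lam * φ i x := by
    have h5 : lam * (Li i * ‖d i‖ ^ 2) ≤ 2 * (1 - β) * φ i x :=
      (le_div_iff₀ hLd).mp hlam
    nlinarith [mul_le_mul_of_nonneg_left h5 hlam0]
  calc μ (x + lam • d) - μ x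
      = f (x + lam • d) - f x + (h i (x i + lam • d i) - h i (x i)) := hμdiff
    _ ≤ (lam * ⟪g x i, d i⟫ + Li i * ‖d i‖ ^ 2 * lam ^ 2 / 2) + lam * (h i yi - h i (x i)) := by
        nlinarith [hfle, hconv]
    _ = -(lam * φ i x) + Li i * ‖d i‖ ^ 2 * lam ^ 2 / 2 := by
        rw [hφval, hphinn]; ring
    _ ≤ -(lam * φ i x) + (1 - β) * lam * φ i x := by linarith [hkey]
    _ = -(β * lam * φ i x) := by ring
end
end

section
/- Convex-case sufficiency of the modified line-search test: suppose f is convex. Let x ∈ X, s ∈ {1,…,n}, y_s ∈ Y_s(x), define d by d_s = y_s − x_s and d_i = 0 for i ≠ s, and let λ ∈ (0, 1], β ∈ (0,1). If ⟨g_s(x + λ d), d_s⟩ + λ^{-1}( h_s(x_s + λ d_s) − h_s(x_s) ) ≤ −β φ_s(x), then μ(x + λ d) ≤ μ(x) − β λ φ_s(x). -/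
open scoped RealInnerProductSpace
open Filter Topology

noncomputable section

lemma grad_ineq {n : ℕ} {N : Fin n → ℕ} (f : Tot N → ℝ)
    (hfcv : ConvexOn ℝ Set.univ f) (a v : Tot N) (gy : Tot N)
    (hgy : HasGradientAt f gy (a + v)) :
    f (a + v) - f a ≤ ⟪gy, v⟫ := by
  set q : ℝ → ℝ := fun t => f (a + t • v) with hqdef
  have hline : ∀ t : ℝ, HasDerivAt (fun t : ℝ => a + t • v) v t := by
    intro t
    simpa using ((hasDerivAt_id t).smul_const v).const_add a
  have hq1 : HasDerivAt q ⟪gy, v⟫ 1 := by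
    have := (hasGradientAt_iff_hasFDerivAt.mp (by simpa using hgy)).comp_hasDerivAt
      (1 : ℝ) (hline 1)
    simp only [InnerProductSpace.toDual_apply_apply] at this
    exact this
  have hqcv : ConvexOn ℝ (Set.univ : Set ℝ) q := by
    have := hfcv.comp_affineMap
      (AffineMap.lineMap a (a + v) : ℝ →ᵃ[ℝ] Tot N)
    have heq : (f ∘ (AffineMap.lineMap a (a + v) : ℝ →ᵃ[ℝ] Tot N)) = q := by
      funext t
      simp [q, AffineMap.lineMap_apply, add_comm]
    rw [heq] at this
    simpa using this
  have := hqcv.slope_le_of_hasDerivAt (Set.mem_univ (0:ℝ)) (Set.mem_univ (1:ℝ))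
    (by norm_num) hq1
  simpa [slope, q] using this

theorem stmt12
    {n : ℕ} {N : Fin n → ℕ}
    (Xi : ∀ i, Set (Blk N i))
    (hXne : ∀ i, (Xi i).Nonempty)
    (hXcv : ∀ i, Convex ℝ (Xi i))
    (hXcp : ∀ i, IsCompact (Xi i))
    (f : Tot N → ℝ) (g : Tot N → Tot N)
    (hf : ∀ x, HasGradientAt f (g x) x)
    (hg : Continuous g)
    (h : ∀ i, Blk N i → ℝ)
    (hhcv : ∀ i, ConvexOn ℝ (Xi i) (h i))
    (hhlsc : ∀ i, LowerSemicontinuousOn (h i) (Xi i))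
    (X : Set (Tot N)) (hX : X = {x | ∀ i, x i ∈ Xi i})
    (μ : Tot N → ℝ) (hμ : ∀ x, μ x = f x + ∑ i, h i (x i))
    (φ : ∀ i, Tot N → ℝ)
    (hφ : ∀ i x, φ i x =
      sSup ((fun y => ⟪g x i, x i - y⟫ + h i (x i) - h i y) '' Xi i))
    (Y : ∀ i, Tot N → Set (Blk N i))
    (hY : ∀ i x, Y i x = {y ∈ Xi i | ∀ z ∈ Xi i,
      ⟪g x i, y⟫ + h i y ≤ ⟪g x i, z⟫ + h i z})
    (hfcv : ConvexOn ℝ Set.univ f)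
    (β : ℝ) (hβ : β ∈ Set.Ioo (0 : ℝ) 1)
    (x : Tot N) (hx : x ∈ X) (s : Fin n)
    (ys : Blk N s) (hys : ys ∈ Y s x)
    (d : Tot N) (hds : d s = ys - x s) (hd0 : ∀ i, i ≠ s → d i = 0)
    (lam : ℝ) (hlam0 : 0 < lam) (hlam1 : lam ≤ 1)
    (htest : ⟪g (x + lam • d) s, d s⟫
        + (h s (x s + lam • d s) - h s (x s)) / lam ≤ -(β * φ s x)) :
    μ (x + lam • d) ≤ μ x - β * lam * φ s x := by
  set y := x + lam • d with hy
  -- gradient inequality for convex f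
  have hgrad : f y - f x ≤ ⟪g y, lam • d⟫ := grad_ineq f hfcv x (lam • d) (g y) (hf y)
  -- inner product reduces to block s
  have hinner : ⟪g y, lam • d⟫ = lam * ⟪g y s, d s⟫ := by
    rw [real_inner_smul_right]
    congr 1
    rw [PiLp.inner_apply]
    rw [Fintype.sum_eq_single s]
    intro i hi
    rw [hd0 i hi, inner_zero_right]
  -- h sum difference
  have hcoord : ∀ i, y i = x i + lam • d i := by
    intro i; simp [hy, PiLp.add_apply, PiLp.smul_apply]
  have hsum : ∑ i, h i (y i) - ∑ i, h i (x i)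
      = h s (x s + lam • d s) - h s (x s) := by
    rw [← Finset.sum_sub_distrib]
    rw [Fintype.sum_eq_single s]
    · rw [hcoord s]
    · intro i hi
      rw [hcoord i, hd0 i hi]
      simp
  have hkey : lam * (⟪g y s, d s⟫ + (h s (x s + lam • d s) - h s (x s)) / lam)
      ≤ lam * (-(β * φ s x)) := mul_le_mul_of_nonneg_left htest hlam0.le
  have hμy := hμ y
  have hμx := hμ x
  have hdiv : lam * ((h s (x s + lam • d s) - h s (x s)) / lam)
      = h s (x s + lam • d s) - h s (x s) := by
    field_simp
  nlinarith [hgrad, hinner, hsum, hkey]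
end
end

section
/- Finite identification under the sharp solution condition: suppose f is convex, g is Lipschitz continuous with constant L < ∞, the sharp solution condition holds (there exist τ > 0 and x̄ ∈ X with ⟨g(x̄), x − x̄⟩ + h(x) − h(x̄) ≥ τ ‖x − x̄‖ for all x ∈ X), and {z^l} ⊆ X is a sequence converging to x̄. Then there exists an index t such that Y(z^t) = {x̄}, the solution set of the minimization of μ over X. -/
open scoped RealInnerProductSpace
open Filter Topology

noncomputable section

lemma grad_ineq_s16 {E : Type*} [NormedAddCommGroup E] [InnerProductSpace ℝ E] [CompleteSpace E]
    {f : E → ℝ} {gx x : E} (hf : HasGradientAt f gx x)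
    (hc : ConvexOn ℝ Set.univ f) (y : E) :
    f x + ⟪gx, y - x⟫ ≤ f y := by
  set φ : ℝ → ℝ := fun t => f (x + t • (y - x)) with hφ
  have hline : HasDerivAt (fun t : ℝ => x + t • (y - x)) (y - x) 0 := by
    simpa using ((hasDerivAt_id (0:ℝ)).smul_const (y - x)).const_add x
  have hF : HasFDerivAt f ((InnerProductSpace.toDual ℝ E) gx) x :=
    (hasGradientAt_iff_hasFDerivAt).1 hf
  have hderiv : HasDerivAt φ ⟪gx, y - x⟫ 0 := by
    have hF' : HasFDerivAt f ((InnerProductSpace.toDual ℝ E) gx)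
        ((fun t : ℝ => x + t • (y - x)) 0) := by simpa using hF
    have := hF'.comp_hasDerivAt (0:ℝ) hline
    simp only [InnerProductSpace.toDual_apply_apply] at this
    exact this
  have hslope : Tendsto (slope φ 0) (𝓝[>] 0) (𝓝 ⟪gx, y - x⟫) :=
    ((hasDerivAt_iff_tendsto_slope).1 hderiv).mono_left
      (nhdsWithin_mono 0 (fun t ht => ne_of_gt ht))
  have hbound : ∀ᶠ t in 𝓝[>] (0:ℝ), slope φ 0 t ≤ f y - f x := by
    filter_upwards [Ioc_mem_nhdsGT_of_mem (by simp : (0:ℝ) ∈ Set.Ico (0:ℝ) 1)] with t ht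
    have ht0 : 0 < t := ht.1
    have ht1 : t ≤ 1 := ht.2
    have hcx : φ t ≤ (1 - t) * f x + t * f y := by
      have := hc.2 (Set.mem_univ x) (Set.mem_univ y)
        (by linarith : (0:ℝ) ≤ 1 - t) (le_of_lt ht0) (by ring)
      have hpt : (1 - t) • x + t • y = x + t • (y - x) := by
        rw [smul_sub]; module
      simpa [hφ, hpt, smul_eq_mul] using this
    have hφ0 : φ 0 = f x := by simp [hφ]
    rw [slope_def_field, sub_zero, div_le_iff₀ ht0]
    nlinarith [hcx, hφ0]
  have := le_of_tendsto hslope hbound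
  linarith

lemma block_norm_le {n : ℕ} {E : Fin n → Type*} [∀ i, NormedAddCommGroup (E i)]
    [∀ i, InnerProductSpace ℝ (E i)] (v : PiLp 2 E) (i : Fin n) :
    ‖v i‖ ≤ ‖v‖ := by
  have h2 : ‖v i‖ ^ 2 ≤ ‖v‖ ^ 2 := by
    have : ⟪v, v⟫ = ∑ j, ⟪v j, v j⟫ := PiLp.inner_apply v v
    rw [real_inner_self_eq_norm_sq] at this
    have h1 : ∑ j, ⟪v j, v j⟫ = ∑ j, ‖v j‖ ^ 2 := by
      simp [real_inner_self_eq_norm_sq]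
    rw [h1] at this
    rw [this]
    exact Finset.single_le_sum (f := fun j => ‖v j‖ ^ 2) (fun j _ => sq_nonneg _)
      (Finset.mem_univ i)
  exact (pow_le_pow_iff_left₀ (norm_nonneg _) (norm_nonneg _) two_ne_zero).1 h2

theorem stmt16
    {n : ℕ} {N : Fin n → ℕ}
    (Xi : ∀ i, Set (Blk N i))
    (hXne : ∀ i, (Xi i).Nonempty)
    (hXcv : ∀ i, Convex ℝ (Xi i))
    (hXcp : ∀ i, IsCompact (Xi i))
    (f : Tot N → ℝ) (g : Tot N → Tot N)
    (hf : ∀ x, HasGradientAt f (g x) x)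
    (hg : Continuous g)
    (h : ∀ i, Blk N i → ℝ)
    (hhcv : ∀ i, ConvexOn ℝ (Xi i) (h i))
    (hhlsc : ∀ i, LowerSemicontinuousOn (h i) (Xi i))
    (X : Set (Tot N)) (hX : X = {x | ∀ i, x i ∈ Xi i})
    (μ : Tot N → ℝ) (hμ : ∀ x, μ x = f x + ∑ i, h i (x i))
    (Y : ∀ i, Tot N → Set (Blk N i))
    (hY : ∀ i x, Y i x = {y ∈ Xi i | ∀ z ∈ Xi i,
      ⟪g x i, y⟫ + h i y ≤ ⟪g x i, z⟫ + h i z})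
    (hfcv : ConvexOn ℝ Set.univ f)
    (L τ : ℝ) (hτ : 0 < τ)
    (hL : ∀ x y : Tot N, ‖g x - g y‖ ≤ L * ‖x - y‖)
    (xb : Tot N) (hxb : xb ∈ X)
    (hsharp : ∀ x ∈ X,
      τ * ‖x - xb‖ ≤ ⟪g xb, x - xb⟫ + (∑ i, h i (x i)) - ∑ i, h i (xb i))
    (z : ℕ → Tot N) (hz : ∀ l, z l ∈ X)
    (hzt : Tendsto z atTop (𝓝 xb)) :
    ∃ t : ℕ, {y : Tot N | ∀ i, y i ∈ Y i (z t)} = {xb} ∧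
      {x | x ∈ X ∧ ∀ w ∈ X, μ x ≤ μ w} = {xb} := by
  have hxbi : ∀ i, xb i ∈ Xi i := by rw [hX] at hxb; exact hxb
  -- choose t with ‖g (z t) - g xb‖ < τ
  have hgz : Tendsto (fun l => ‖g (z l) - g xb‖) atTop (𝓝 0) := by
    have h0 : Tendsto (fun l => g (z l)) atTop (𝓝 (g xb)) :=
      (hg.tendsto xb).comp hzt
    exact tendsto_iff_norm_sub_tendsto_zero.1 h0
  obtain ⟨t, ht⟩ := (hgz.eventually (gt_mem_nhds hτ)).exists
  refine ⟨t, ?_, ?_⟩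
  · -- first set equality
    set ε := ‖g (z t) - g xb‖ with hεdef
    have hε : ε < τ := ht
    have hε0 : 0 ≤ ε := norm_nonneg _
    have keyfull : ∀ y ∈ X, (τ - ε) * ‖y - xb‖ ≤
        ⟪g (z t), y - xb⟫ + ((∑ i, h i (y i)) - ∑ i, h i (xb i)) := by
      intro y hy
      have h1 := hsharp y hy
      have hsub : ⟪g (z t) - g xb, y - xb⟫
          = ⟪g (z t), y - xb⟫ - ⟪g xb, y - xb⟫ := inner_sub_left _ _ _
      have h3 : -(ε * ‖y - xb‖) ≤ ⟪g (z t) - g xb, y - xb⟫ := by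
        have ha := abs_real_inner_le_norm (g (z t) - g xb) (y - xb)
        have hb := neg_abs_le (⟪g (z t) - g xb, y - xb⟫)
        rw [← hεdef] at ha
        linarith
      nlinarith [h1, h3, hsub]
    have keyblk : ∀ i, ∀ z' ∈ Xi i, (τ - ε) * ‖z' - xb i‖ ≤
        ⟪g (z t) i, z' - xb i⟫ + (h i z' - h i (xb i)) := by
      intro i z' hz'
      set w : Tot N := WithLp.toLp 2 (Function.update xb i z') with hw
      have hwi : w i = z' := Function.update_self i z' xb
      have hwj : ∀ j, j ≠ i → w j = xb j := fun j hj => Function.update_of_ne hj z' xb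
      have hwX : w ∈ X := by
        rw [hX]; intro j
        by_cases hj : j = i
        · subst hj; rw [hwi]; exact hz'
        · rw [hwj j hj]; exact hxbi j
      have hsp := hsharp w hwX
      have hsum : (∑ j, h j (w j)) - ∑ j, h j (xb j) = h i z' - h i (xb i) := by
        rw [← Finset.sum_sub_distrib]
        rw [Finset.sum_eq_single i]
        · rw [hwi]
        · intro j _ hj; rw [hwj j hj]; ring
        · simp
      have hinner : ⟪g xb, w - xb⟫ = ⟪g xb i, z' - xb i⟫ := by
        rw [PiLp.inner_apply]
        rw [Finset.sum_eq_single i]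
        · have : (w - xb) i = z' - xb i := by
            show w i - xb i = z' - xb i
            rw [hwi]
          rw [this]
        · intro j _ hj
          have : (w - xb) j = 0 := by
            show w j - xb j = 0
            rw [hwj j hj, sub_self]
          rw [this, inner_zero_right]
        · simp
      have hni : (w - xb) i = z' - xb i := by
        show w i - xb i = z' - xb i
        rw [hwi]
      have hnorm : ‖z' - xb i‖ ≤ ‖w - xb‖ := by
        rw [← hni]; exact block_norm_le _ i
      have hcross : -(ε * ‖z' - xb i‖) ≤ ⟪g (z t) i - g xb i, z' - xb i⟫ := by
        have ha := abs_real_inner_le_norm (g (z t) i - g xb i) (z' - xb i)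
        have hb := neg_abs_le (⟪g (z t) i - g xb i, z' - xb i⟫)
        have hc : ‖g (z t) i - g xb i‖ ≤ ε := by
          have : (g (z t) - g xb) i = g (z t) i - g xb i := rfl
          rw [← this, hεdef]; exact block_norm_le _ i
        nlinarith [norm_nonneg (z' - xb i)]
      have hsubi : ⟪g (z t) i - g xb i, z' - xb i⟫
          = ⟪g (z t) i, z' - xb i⟫ - ⟪g xb i, z' - xb i⟫ := inner_sub_left _ _ _
      have hτw : τ * ‖z' - xb i‖ ≤ τ * ‖w - xb‖ :=
        mul_le_mul_of_nonneg_left hnorm hτ.le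
      have expand : (τ - ε) * ‖z' - xb i‖ = τ * ‖z' - xb i‖ - ε * ‖z' - xb i‖ := by ring
      rw [expand]
      linarith [hsp, hinner, hsum, hcross, hsubi, hτw]
    ext y
    simp only [Set.mem_setOf_eq, Set.mem_singleton_iff]
    constructor
    · intro hy
      have hy' : ∀ i, y i ∈ Xi i ∧ ∀ z' ∈ Xi i,
          ⟪g (z t) i, y i⟫ + h i (y i) ≤ ⟪g (z t) i, z'⟫ + h i z' := by
        intro i; have := hy i; rw [hY] at this; exact this
      have hyX : y ∈ X := by rw [hX]; exact fun i => (hy' i).1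
      have h1 : ∑ i, (⟪g (z t) i, y i⟫ + h i (y i))
          ≤ ∑ i, (⟪g (z t) i, xb i⟫ + h i (xb i)) :=
        Finset.sum_le_sum fun i _ => (hy' i).2 (xb i) (hxbi i)
      have h2 : ⟪g (z t), y - xb⟫
          = ∑ i, ⟪g (z t) i, y i⟫ - ∑ i, ⟪g (z t) i, xb i⟫ := by
        rw [PiLp.inner_apply, ← Finset.sum_sub_distrib]
        refine Finset.sum_congr rfl fun i _ => ?_
        have : (y - xb) i = y i - xb i := rfl
        rw [this, inner_sub_right]
      rw [Finset.sum_add_distrib, Finset.sum_add_distrib] at h1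
      have h3 := keyfull y hyX
      have hτε : 0 < τ - ε := by linarith
      have hn0 : ‖y - xb‖ ≤ 0 := by nlinarith
      have : y - xb = 0 := norm_le_zero_iff.1 hn0
      exact sub_eq_zero.1 this
    · intro hy; rw [hy]
      intro i
      rw [hY]
      refine ⟨hxbi i, fun z' hz' => ?_⟩
      have h1 := keyblk i z' hz'
      have h0 : 0 ≤ (τ - ε) * ‖z' - xb i‖ :=
        mul_nonneg (by linarith) (norm_nonneg _)
      have h2 : ⟪g (z t) i, z' - xb i⟫
          = ⟪g (z t) i, z'⟫ - ⟪g (z t) i, xb i⟫ := inner_sub_right _ _ _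
      linarith
  · -- second set equality
    have hbig : ∀ w ∈ X, μ xb + τ * ‖w - xb‖ ≤ μ w := by
      intro w hw
      have h1 := hsharp w hw
      have h2 := grad_ineq_s16 (hf xb) hfcv w
      rw [hμ w, hμ xb]
      linarith
    ext x
    simp only [Set.mem_setOf_eq, Set.mem_singleton_iff]
    constructor
    · rintro ⟨hxX, hmin⟩
      have h1 := hbig x hxX
      have h2 := hmin xb hxb
      have hn0 : ‖x - xb‖ ≤ 0 := by nlinarith
      have : x - xb = 0 := norm_le_zero_iff.1 hn0
      exact sub_eq_zero.1 this
    · intro hx; rw [hx]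
      refine ⟨hxb, fun w hw => ?_⟩
      have h1 := hbig w hw
      nlinarith [mul_nonneg hτ.le (norm_nonneg (w - xb))]
end
end
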